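/- For every integer k ≥ 0, the F-linear map φ_k : M_k → D defined on the basis by φ_k(m_j) = 1 for j even and φ_k(m_j) = x for j odd is a surjective homomorphism of D-D-bimodules; in particular, φ_k does not factor through the simple D-D-bimodule. -/

import Mathlib

open DualNumber TrivSqZeroExt

/-- Multiplication by `ε` on the dual numbers `D = F[x]/(x²)`, as an `F`-linear map.
Since `D` is commutative this is both the left and the right action of `x` on the
regular bimodule. -/
noncomputable def xD (F : Type) [Field F] : DualNumber F →ₗ[F] DualNumber F :=
  LinearMap.mulLeft F (eps : DualNumber F)

/-- The underlying `F`-vector space of the string bimodule `M_k`: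
coordinates indexed by `Fin (2*k+3)`, where the Lean index `j` corresponds to the
basis vector `m_{j+1}` of the paper. -/
abbrev Mcar (F : Type) [Field F] (k : ℕ) := Fin (2 * k + 3) → F

/-- The left action of `x` on `M_k`:  `x·m_{2j} = m_{2j+1}`, `x·m_odd = 0`. -/
def lM (F : Type) [Field F] (k : ℕ) : Mcar F k →ₗ[F] Mcar F k where
  toFun v := fun j =>
    if ((j : ℕ) % 2 = 0 ∧ (j : ℕ) ≠ 0) then
      v ⟨(j : ℕ) - 1, lt_of_le_of_lt (Nat.sub_le _ _) j.isLt⟩ else 0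
  map_add' u v := by
    funext j; by_cases h : ((j : ℕ) % 2 = 0 ∧ (j : ℕ) ≠ 0) <;> simp only [h, Pi.add_apply, Pi.smul_apply, RingHom.id_apply, if_true, if_false, ne_eq, not_false_eq_true, and_self, add_zero, smul_zero]
  map_smul' c v := by
    funext j; by_cases h : ((j : ℕ) % 2 = 0 ∧ (j : ℕ) ≠ 0) <;> simp only [h, Pi.add_apply, Pi.smul_apply, RingHom.id_apply, if_true, if_false, ne_eq, not_false_eq_true, and_self, add_zero, smul_zero]

/-- The right action of `x` on `M_k`:  `m_{2j}·x = m_{2j-1}`, `m_odd·x = 0`. -/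
def rM (F : Type) [Field F] (k : ℕ) : Mcar F k →ₗ[F] Mcar F k where
  toFun v := fun j =>
    if h : ((j : ℕ) % 2 = 0 ∧ (j : ℕ) < 2 * k + 2) then
      v ⟨(j : ℕ) + 1, Nat.succ_lt_succ h.2⟩ else 0
  map_add' u v := by
    funext j
    by_cases h : ((j : ℕ) % 2 = 0 ∧ (j : ℕ) < 2 * k + 2) <;> simp [h]
  map_smul' c v := by
    funext j
    by_cases h : ((j : ℕ) % 2 = 0 ∧ (j : ℕ) < 2 * k + 2) <;> simp [h]

/-- The basis vector `m_{j+1}` of `M_k`. -/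
def eM (F : Type) [Field F] (k : ℕ) (j : Fin (2 * k + 3)) : Mcar F k := Pi.single j 1

/-- A morphism of `D`-`D`-bimodules, where a bimodule is encoded as an `F`-vector
space together with the two (commuting, square-zero) operators giving the left and
right actions of `x`. -/
def IsBimodHom (F : Type) [Field F] {V W : Type} [AddCommGroup V] [Module F V]
    [AddCommGroup W] [Module F W] (lV rV : V →ₗ[F] V) (lW rW : W →ₗ[F] W)
    (f : V →ₗ[F] W) : Prop :=
  f ∘ₗ lV = lW ∘ₗ f ∧ f ∘ₗ rV = rW ∘ₗ f

/-- `f` factors through the simple `D`-`D`-bimodule, i.e. the one-dimensional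
bimodule `F` on which `x` acts as zero on both sides. -/
def FactorsThroughSimple (F : Type) [Field F] {V W : Type} [AddCommGroup V] [Module F V]
    [AddCommGroup W] [Module F W] (lV rV : V →ₗ[F] V) (lW rW : W →ₗ[F] W)
    (f : V →ₗ[F] W) : Prop :=
  ∃ (h : V →ₗ[F] F) (g : F →ₗ[F] W),
    IsBimodHom F lV rV 0 0 h ∧ IsBimodHom F 0 0 lW rW g ∧ f = g ∘ₗ h

/-- The bimodule homomorphism `φ_k : M_k → D`, sending `m_j` to `1` for `j` even and
to `x` for `j` odd (paper numbering). -/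
noncomputable def phi (F : Type) [Field F] (k : ℕ) : Mcar F k →ₗ[F] DualNumber F :=
  (Algebra.linearMap F (DualNumber F)) ∘ₗ
      (∑ j ∈ Finset.univ.filter (fun j : Fin (2 * k + 3) => (j : ℕ) % 2 = 1),
        LinearMap.proj j) +
    (TrivSqZeroExt.inrHom F F) ∘ₗ
      (∑ j ∈ Finset.univ.filter (fun j : Fin (2 * k + 3) => (j : ℕ) % 2 = 0),
        LinearMap.proj j)


section auxlemmas
variable (F : Type) [Field F] (k : ℕ)

lemma phi_fst (v : Mcar F k) : (phi F k v).fst =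
    ∑ j ∈ Finset.univ.filter (fun j : Fin (2 * k + 3) => (j : ℕ) % 2 = 1), v j := by
  simp [phi, LinearMap.sum_apply, fst_sum, snd_sum, TrivSqZeroExt.algebraMap_eq_inl,
    fst_smul, snd_smul]

lemma phi_snd (v : Mcar F k) : (phi F k v).snd =
    ∑ j ∈ Finset.univ.filter (fun j : Fin (2 * k + 3) => (j : ℕ) % 2 = 0), v j := by
  simp [phi, LinearMap.sum_apply, fst_sum, snd_sum, TrivSqZeroExt.algebraMap_eq_inl,
    fst_smul, snd_smul]

lemma xD_fst (z : DualNumber F) : (xD F z).fst = 0 := by simp [xD]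

lemma xD_snd (z : DualNumber F) : (xD F z).snd = z.fst := by simp [xD]

lemma lM_odd (v : Mcar F k) (j : Fin (2 * k + 3)) (hj : (j : ℕ) % 2 = 1) :
    lM F k v j = 0 := by
  simp only [lM, LinearMap.coe_mk, AddHom.coe_mk]
  rw [if_neg]; omega

lemma rM_odd (v : Mcar F k) (j : Fin (2 * k + 3)) (hj : (j : ℕ) % 2 = 1) :
    rM F k v j = 0 := by
  simp only [rM, LinearMap.coe_mk, AddHom.coe_mk]
  rw [dif_neg]; omega

lemma lM_sum (v : Mcar F k) :
    ∑ j ∈ Finset.univ.filter (fun j : Fin (2*k+3) => (j:ℕ) % 2 = 0), lM F k v j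
    = ∑ j ∈ Finset.univ.filter (fun j : Fin (2*k+3) => (j:ℕ) % 2 = 1), v j := by
  rw [show Finset.univ.filter (fun j : Fin (2*k+3) => (j:ℕ) % 2 = 0)
      = Finset.univ.filter (fun j : Fin (2*k+3) => (j:ℕ) % 2 = 0 ∧ (j:ℕ) ≠ 0)
        ∪ {(0 : Fin (2*k+3))} from by
    ext j; simp only [Finset.mem_filter, Finset.mem_union, Finset.mem_univ, true_and, Finset.mem_singleton, Fin.ext_iff, Fin.val_zero]; omega]
  rw [Finset.sum_union (by simp [Finset.disjoint_singleton_right])]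
  have h0 : lM F k v 0 = 0 := by simp [lM]
  rw [Finset.sum_singleton, h0, add_zero]
  refine Finset.sum_bij' (fun j hj => ⟨(j:ℕ) - 1, by omega⟩)
    (fun j hj => ⟨(j:ℕ) + 1, by
      simp [Finset.mem_filter] at hj; omega⟩) ?_ ?_ ?_ ?_ ?_
  · intro a ha; simp [Finset.mem_filter] at ha ⊢; have h2 : (a:ℕ) ≠ 0 := fun h => ha.2 (Fin.ext (by rw [Fin.val_zero]; exact h)); omega
  · intro a ha; simp [Finset.mem_filter] at ha ⊢; omega
  · intro a ha; simp [Finset.mem_filter] at ha; ext; simp; have h2 : (a:ℕ) ≠ 0 := fun h => ha.2 (Fin.ext (by rw [Fin.val_zero]; exact h)); omega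
  · intro a ha; simp [Finset.mem_filter] at ha; ext; simp
  · intro a ha; simp [Finset.mem_filter] at ha; simp [lM, ha.1, ha.2]

lemma rM_sum (v : Mcar F k) :
    ∑ j ∈ Finset.univ.filter (fun j : Fin (2*k+3) => (j:ℕ) % 2 = 0), rM F k v j
    = ∑ j ∈ Finset.univ.filter (fun j : Fin (2*k+3) => (j:ℕ) % 2 = 1), v j := by
  rw [show Finset.univ.filter (fun j : Fin (2*k+3) => (j:ℕ) % 2 = 0)
      = Finset.univ.filter (fun j : Fin (2*k+3) => (j:ℕ) % 2 = 0 ∧ (j:ℕ) < 2*k+2)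
        ∪ {(⟨2*k+2, by omega⟩ : Fin (2*k+3))} from by
    ext j; simp [Finset.mem_filter, Fin.ext_iff]; omega]
  rw [Finset.sum_union (by simp [Finset.disjoint_singleton_right, Fin.ext_iff])]
  have h0 : rM F k v ⟨2*k+2, by omega⟩ = 0 := by
    simp only [rM, LinearMap.coe_mk, AddHom.coe_mk]
    rw [dif_neg]; simp
  rw [Finset.sum_singleton, h0, add_zero]
  refine Finset.sum_bij' (fun j hj => ⟨(j:ℕ) + 1, by
      simp [Finset.mem_filter] at hj; omega⟩)
    (fun j hj => ⟨(j:ℕ) - 1, by omega⟩) ?_ ?_ ?_ ?_ ?_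
  · intro a ha; simp [Finset.mem_filter] at ha ⊢; omega
  · intro a ha; simp [Finset.mem_filter] at ha ⊢; omega
  · intro a ha; simp [Finset.mem_filter] at ha; ext; simp
  · intro a ha; simp [Finset.mem_filter] at ha; ext; simp; omega
  · intro a ha; simp [Finset.mem_filter] at ha
    simp only [rM, LinearMap.coe_mk, AddHom.coe_mk]
    rw [dif_pos ha]

end auxlemmas


theorem stmt_3 (F : Type) [Field F] (k : ℕ) :
    IsBimodHom F (lM F k) (rM F k) (xD F) (xD F) (phi F k) ∧
      Function.Surjective (phi F k) ∧
      ¬ FactorsThroughSimple F (lM F k) (rM F k) (xD F) (xD F) (phi F k) := by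
  have hbim : IsBimodHom F (lM F k) (rM F k) (xD F) (xD F) (phi F k) := by
    constructor
    · apply LinearMap.ext; intro v
      apply TrivSqZeroExt.ext
      · rw [LinearMap.comp_apply, LinearMap.comp_apply, phi_fst, xD_fst]
        exact Finset.sum_eq_zero fun j hj =>
          lM_odd F k v j (by simpa using hj)
      · rw [LinearMap.comp_apply, LinearMap.comp_apply, phi_snd, xD_snd, phi_fst]
        exact lM_sum F k v
    · apply LinearMap.ext; intro v
      apply TrivSqZeroExt.ext
      · rw [LinearMap.comp_apply, LinearMap.comp_apply, phi_fst, xD_fst]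
        exact Finset.sum_eq_zero fun j hj =>
          rM_odd F k v j (by simpa using hj)
      · rw [LinearMap.comp_apply, LinearMap.comp_apply, phi_snd, xD_snd, phi_fst]
        exact rM_sum F k v
  have hsurj : Function.Surjective (phi F k) := by
    intro d
    refine ⟨fun j => if (j : ℕ) = 0 then d.snd else if (j : ℕ) = 1 then d.fst else 0, ?_⟩
    apply TrivSqZeroExt.ext
    · rw [phi_fst]
      rw [Finset.sum_eq_single (⟨1, by omega⟩ : Fin (2*k+3))]
      · simp
      · intro b hb hb'
        simp [Finset.mem_filter] at hb
        rw [if_neg (by omega), if_neg (by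
          intro h
          exact hb' (by ext; simpa using h)), ]
      · intro h; simp [Finset.mem_filter] at h
    · rw [phi_snd]
      rw [Finset.sum_eq_single (⟨0, by omega⟩ : Fin (2*k+3))]
      · simp
      · intro b hb hb'
        simp [Finset.mem_filter] at hb
        rw [if_neg (by
          intro h
          exact hb' (by ext; simpa using h)), if_neg (by omega)]
      · intro h; simp [Finset.mem_filter] at h
  refine ⟨hbim, hsurj, ?_⟩
  rintro ⟨h, g, ⟨hl, -⟩, -, heq⟩
  have hz : xD F ∘ₗ phi F k = 0 := by
    rw [← hbim.1, heq]
    have : h ∘ₗ lM F k = 0 := by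
      rw [hl]; ext v; simp
    rw [LinearMap.comp_assoc, this, LinearMap.comp_zero]
  obtain ⟨v, hv⟩ := hsurj 1
  have h1 : xD F (phi F k v) = 0 := by
    have := congrArg (fun f => f v) hz
    simpa using this
  rw [hv] at h1
  have : (xD F (1 : DualNumber F)).snd = (1 : F) := by
    rw [xD_snd]; simp
  rw [h1] at this
  simp at this
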